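/- arXiv:1509.08330 — 2 statements merged into one kernel-verified Lean document; each statement's English description precedes it below -/
import Mathlib

section
/- Let $\alpha \in \mathbb{R}$, $\mu > 0$, and let $f, g : \mathbb{R} \to \mathbb{R}$ be continuous on $[\alpha, \infty)$ and differentiable on $(\alpha, \infty)$ with $f(t) \geq 0$ and $g(t) \geq 0$ for all $t \geq \alpha$. Let $a : \mathbb{R} \to \mathbb{R}$ satisfy $(t - \alpha)\, a(t) \leq 2\mu - 1$ for all $t > \alpha$. Assume $f'(t) \leq -2 g(t) - 2 f(t)^2$ and $g'(t) \leq a(t)\, g(t)$ for all $t > \alpha$. Then $(t-\alpha)\, g(t) + \mu f(t) \leq \mu f(\alpha)$ for all $t \geq \alpha$; in particular $g(t) \leq \frac{\mu f(\alpha)}{t - \alpha}$ for all $t > \alpha$. -/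
/-- Time-weighted second-derivative decay (ODE model): with `f, g ≥ 0` continuous on
`[α, ∞)` and differentiable on `(α, ∞)`, `(t - α) a t ≤ 2μ - 1`, `f' ≤ -2g - 2f²` and
`g' ≤ a g`, the quantity `(t - α) g + μ f` is bounded by `μ f(α)`; in particular
`g t ≤ μ f(α) / (t - α)` for `t > α`. -/
theorem weighted_second_derivative_decay (α μ : ℝ) (hμ : 0 < μ) (f f' g g' a : ℝ → ℝ)
    (hfc : ContinuousOn f (Set.Ici α)) (hgc : ContinuousOn g (Set.Ici α))
    (hfd : ∀ t : ℝ, α < t → HasDerivAt f (f' t) t)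
    (hgd : ∀ t : ℝ, α < t → HasDerivAt g (g' t) t)
    (hf0 : ∀ t : ℝ, α ≤ t → 0 ≤ f t)
    (hg0 : ∀ t : ℝ, α ≤ t → 0 ≤ g t)
    (ha : ∀ t : ℝ, α < t → (t - α) * a t ≤ 2 * μ - 1)
    (hf' : ∀ t : ℝ, α < t → f' t ≤ -2 * g t - 2 * (f t) ^ 2)
    (hg' : ∀ t : ℝ, α < t → g' t ≤ a t * g t) :
    (∀ t : ℝ, α ≤ t → (t - α) * g t + μ * f t ≤ μ * f α) ∧
      (∀ t : ℝ, α < t → g t ≤ μ * f α / (t - α)) := by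
  set F : ℝ → ℝ := fun t => (t - α) * g t + μ * f t with hF
  have hFd : ∀ t : ℝ, α < t →
      HasDerivAt F (g t + (t - α) * g' t + μ * f' t) t := by
    intro t ht
    have h1 : HasDerivAt (fun t => (t - α) * g t) (1 * g t + (t - α) * g' t) t :=
      ((hasDerivAt_id t).sub_const α).mul (hgd t ht)
    have h2 : HasDerivAt (fun t => μ * f t) (μ * f' t) t := (hfd t ht).const_mul μ
    have h3 := h1.add h2
    rw [one_mul] at h3
    exact h3
  have hFc : ContinuousOn F (Set.Ici α) :=
    (((continuous_id.sub continuous_const).continuousOn).mul hgc).add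
      (continuousOn_const.mul hfc)
  have hmono : AntitoneOn F (Set.Ici α) := by
    apply antitoneOn_of_deriv_nonpos (convex_Ici α) hFc
    · intro t ht
      rw [interior_Ici] at ht
      exact (hFd t ht).differentiableAt.differentiableWithinAt
    · intro t ht
      rw [interior_Ici] at ht
      rw [(hFd t ht).deriv]
      have hta : 0 < t - α := sub_pos.mpr ht
      have htle : α ≤ t := le_of_lt ht
      have h1 : (t - α) * g' t ≤ (t - α) * (a t * g t) :=
        mul_le_mul_of_nonneg_left (hg' t ht) hta.le
      have h2 : (t - α) * a t * g t ≤ (2 * μ - 1) * g t :=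
        mul_le_mul_of_nonneg_right (ha t ht) (hg0 t htle)
      have h3 : μ * f' t ≤ μ * (-2 * g t - 2 * (f t) ^ 2) :=
        mul_le_mul_of_nonneg_left (hf' t ht) hμ.le
      nlinarith [sq_nonneg (f t), hg0 t htle]
  have main : ∀ t : ℝ, α ≤ t → (t - α) * g t + μ * f t ≤ μ * f α := by
    intro t ht
    have := hmono (Set.self_mem_Ici) ht ht
    simpa [hF] using this
  refine ⟨main, fun t ht => ?_⟩
  have hta : 0 < t - α := sub_pos.mpr ht
  rw [le_div_iff₀ hta]
  have := main t ht.le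
  nlinarith [hf0 t ht.le, mul_nonneg hμ.le (hf0 t ht.le)]
end

section
/- Let $0 < \alpha$, $A \geq 0$, $C \geq 0$, $C_0 \geq 0$, and let $f, g, v, r : \mathbb{R} \to \mathbb{R}$ be functions with $f, g, v$ continuous on $[\alpha, \infty)$ and differentiable on $(\alpha, \infty)$, satisfying for all $t \geq \alpha$: $f(t) \geq 0$, $g(t) \geq 0$, $0 \leq v(t) \leq C_0^2$, $r(t) \geq 0$, and $t\, r(t) \leq A$; and for all $t > \alpha$: $v'(t) \leq -2 f(t)$, $f'(t) \leq -2 g(t) - 2 f(t)^2$, and $g'(t) \leq C\,(r(t) + f(t))\, g(t)$. Then there exists a constant $C' > 0$ (depending only on $\alpha$, $A$, $C$, $C_0$, $f(\alpha)$, $g(\alpha)$) such that $t\,(f(t) + g(t)) \leq C'$ for all $t \geq 2\alpha$. -/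
/-- ODE model of Theorem 2 (Type III warped-product Ricci flow): under the listed
differential inequalities for `f = sup |∇u|²`, `g = sup |D²u|²`, `v = sup u²` and the
Type III bound `t * r t ≤ A` on `r = sup |Rm(h)|`, there is a constant `C' > 0`
(depending only on `α, A, C, C₀, f(α), g(α)`) with `t (f t + g t) ≤ C'` for `t ≥ 2α`. -/
theorem typeIII_decay (α A C C₀ : ℝ) (hα : 0 < α) (hA : 0 ≤ A) (hC : 0 ≤ C)
    (hC₀ : 0 ≤ C₀) (f f' g g' v v' r : ℝ → ℝ)
    (hfc : ContinuousOn f (Set.Ici α)) (hgc : ContinuousOn g (Set.Ici α))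
    (hvc : ContinuousOn v (Set.Ici α))
    (hfd : ∀ t : ℝ, α < t → HasDerivAt f (f' t) t)
    (hgd : ∀ t : ℝ, α < t → HasDerivAt g (g' t) t)
    (hvd : ∀ t : ℝ, α < t → HasDerivAt v (v' t) t)
    (hf0 : ∀ t : ℝ, α ≤ t → 0 ≤ f t)
    (hg0 : ∀ t : ℝ, α ≤ t → 0 ≤ g t)
    (hv0 : ∀ t : ℝ, α ≤ t → 0 ≤ v t)
    (hvC : ∀ t : ℝ, α ≤ t → v t ≤ C₀ ^ 2)
    (hr0 : ∀ t : ℝ, α ≤ t → 0 ≤ r t)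
    (hrA : ∀ t : ℝ, α ≤ t → t * r t ≤ A)
    (hv' : ∀ t : ℝ, α < t → v' t ≤ -2 * f t)
    (hf' : ∀ t : ℝ, α < t → f' t ≤ -2 * g t - 2 * (f t) ^ 2)
    (hg' : ∀ t : ℝ, α < t → g' t ≤ C * (r t + f t) * g t) :
    ∃ C' : ℝ, 0 < C' ∧ ∀ t : ℝ, 2 * α ≤ t → t * (f t + g t) ≤ C' := by
  have hα2 : α ≤ 2 * α := by linarith
  -- f is antitone on [α, ∞)
  have hanti : AntitoneOn f (Set.Ici α) := by
    apply antitoneOn_of_deriv_nonpos (convex_Ici α) hfc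
    · intro x hx
      rw [interior_Ici] at hx
      exact (hfd x hx).differentiableAt.differentiableWithinAt
    · intro x hx
      rw [interior_Ici] at hx
      rw [(hfd x hx).deriv]
      have := hf' x hx
      have h1 := hg0 x hx.le
      nlinarith [sq_nonneg (f x)]
  -- decay bound for f
  have hfdec : ∀ t : ℝ, α < t → f t ≤ 1 / (2 * (t - α)) := by
    intro t ht
    have hden : 0 < 2 * (t - α) := by linarith
    rcases eq_or_lt_of_le (hf0 t ht.le) with h0 | hpos
    · rw [← h0]; positivity
    · -- f > 0 on [α, t]
      have hpos' : ∀ s ∈ Set.Icc α t, 0 < f s := by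
        intro s hs
        exact lt_of_lt_of_le hpos (hanti hs.1 (le_trans hs.1 hs.2) hs.2)
      have hsub : Set.Icc α t ⊆ Set.Ici α := Set.Icc_subset_Ici_self
      -- F = 1/f - 2s is monotone on [α, t]
      have hmono : MonotoneOn (fun s => (f s)⁻¹ - 2 * s) (Set.Icc α t) := by
        apply monotoneOn_of_deriv_nonneg (convex_Icc α t)
        · exact ((hfc.mono hsub).inv₀ (fun s hs => (hpos' s hs).ne')).sub
            (continuousOn_const.mul continuousOn_id)
        · intro x hx
          rw [interior_Icc] at hx
          exact (((hfd x hx.1).inv (hpos' x ⟨hx.1.le, hx.2.le⟩).ne').sub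
            ((hasDerivAt_id x).const_mul 2)).differentiableAt.differentiableWithinAt
        · intro x hx
          rw [interior_Icc] at hx
          have hD : HasDerivAt (fun s => (f s)⁻¹ - 2 * s) (-f' x / f x ^ 2 - 2 * 1) x :=
            ((hfd x hx.1).inv (hpos' x ⟨hx.1.le, hx.2.le⟩).ne').sub
              ((hasDerivAt_id x).const_mul 2)
          rw [hD.deriv]
          have hfx := hpos' x ⟨hx.1.le, hx.2.le⟩
          have := hf' x hx.1
          have h1 := hg0 x hx.1.le
          rw [sub_nonneg, le_div_iff₀ (by positivity)]
          nlinarith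
      have hkey := hmono ⟨le_refl α, ht.le⟩ ⟨ht.le, le_refl t⟩ ht.le
      simp only at hkey
      have hfα : 0 < f α := hpos' α ⟨le_refl α, ht.le⟩
      have h2 : 2 * (t - α) ≤ (f t)⁻¹ := by
        have : 0 ≤ (f α)⁻¹ := by positivity
        linarith
      rw [show f t = ((f t)⁻¹)⁻¹ from (inv_inv _).symm, one_div]
      exact inv_anti₀ hden h2
  -- t * f t ≤ 1 for t ≥ 2α
  have hft1 : ∀ t : ℝ, 2 * α ≤ t → t * f t ≤ 1 := by
    intro t ht
    have htα : α < t := by linarith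
    have htpos : 0 < t := by linarith
    have h1 := hfdec t htα
    have h2 : 1 / (2 * (t - α)) ≤ 1 / t := by
      apply one_div_le_one_div_of_le htpos; linarith
    calc t * f t ≤ t * (1 / t) := by
          apply mul_le_mul_of_nonneg_left (le_trans h1 h2) htpos.le
      _ = 1 := by field_simp
  -- Lyapunov function
  set M : ℝ := Real.exp (C * C₀ ^ 2 / 2) with hM
  have hM1 : 1 ≤ M := by
    rw [hM, show (1:ℝ) = Real.exp 0 from (Real.exp_zero).symm]
    apply Real.exp_le_exp.2; positivity
  set ε : ℝ := 2 / ((1 + C * A) * M) with hε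
  have hCA : (0:ℝ) < 1 + C * A := by nlinarith
  have hMpos : 0 < M := Real.exp_pos _
  have hεpos : 0 < ε := by
    rw [hε]; positivity
  have hε2 : ε * ((1 + C * A) * M) = 2 := by
    rw [hε]; field_simp
  set E : ℝ → ℝ := fun s => Real.exp (C * v s / 2) with hE
  set W : ℝ → ℝ := fun s => f s + ε * (s * (g s * E s)) with hW
  have hEub : ∀ s : ℝ, α ≤ s → E s ≤ M := by
    intro s hs
    apply Real.exp_le_exp.2
    have := hvC s hs
    have := hv0 s hs
    nlinarith
  have hE1 : ∀ s : ℝ, α ≤ s → 1 ≤ E s := by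
    intro s hs
    rw [show (1:ℝ) = Real.exp 0 from (Real.exp_zero).symm]
    apply Real.exp_le_exp.2
    have := hv0 s hs
    positivity
  -- W is antitone on [2α, ∞)
  have hWanti : AntitoneOn W (Set.Ici (2 * α)) := by
    have hsub : Set.Ici (2 * α) ⊆ Set.Ici α := Set.Ici_subset_Ici.2 hα2
    apply antitoneOn_of_deriv_nonpos (convex_Ici _)
    · apply ((hfc.mono hsub)).add
      apply continuousOn_const.mul
      apply continuousOn_id.mul
      apply (hgc.mono hsub).mul
      exact Real.continuous_exp.comp_continuousOn
        ((continuousOn_const.mul (hvc.mono hsub)).div_const 2)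
    · intro x hx
      rw [interior_Ici] at hx
      have hxα : α < x := by linarith [Set.mem_Ioi.1 hx]
      have hDE : HasDerivAt E (E x * (C * v' x / 2)) x :=
        (((hvd x hxα).const_mul C).div_const 2).exp
      have : HasDerivAt W (f' x + ε * (1 * (g x * E x) +
          x * (g' x * E x + g x * (E x * (C * v' x / 2))))) x :=
        (hfd x hxα).add ((((hasDerivAt_id x).mul ((hgd x hxα).mul hDE))).const_mul ε)
      exact this.differentiableAt.differentiableWithinAt
    · intro x hx
      rw [interior_Ici] at hx
      have hxα : α < x := by linarith [Set.mem_Ioi.1 hx]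
      have hxpos : 0 < x := by linarith
      have hDE : HasDerivAt E (E x * (C * v' x / 2)) x :=
        (((hvd x hxα).const_mul C).div_const 2).exp
      have hDW : HasDerivAt W (f' x + ε * (1 * (g x * E x) +
          x * (g' x * E x + g x * (E x * (C * v' x / 2))))) x :=
        (hfd x hxα).add ((((hasDerivAt_id x).mul ((hgd x hxα).mul hDE))).const_mul ε)
      rw [hDW.deriv]
      -- now the pointwise estimate
      have hEx : 0 < E x := Real.exp_pos _
      have hExM : E x ≤ M := hEub x hxα.le
      have hgx := hg0 x hxα.le
      have hfx := hf0 x hxα.le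
      have hrx := hr0 x hxα.le
      have hrAx := hrA x hxα.le
      have h1 := hf' x hxα
      have h2 := hg' x hxα
      have h3 := hv' x hxα
      -- x * g' x * E x ≤ C*A*g x*E x + C*x*f x*g x*E x
      have e1 : x * (g' x * E x) ≤ C * A * (g x * E x) + C * x * f x * (g x * E x) := by
        have : g' x * E x ≤ C * (r x + f x) * g x * E x :=
          mul_le_mul_of_nonneg_right h2 hEx.le
        calc x * (g' x * E x) ≤ x * (C * (r x + f x) * g x * E x) :=
              mul_le_mul_of_nonneg_left this hxpos.le
          _ = C * (x * r x) * (g x * E x) + C * x * f x * (g x * E x) := by ring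
          _ ≤ C * A * (g x * E x) + C * x * f x * (g x * E x) := by
              have : C * (x * r x) ≤ C * A := mul_le_mul_of_nonneg_left hrAx hC
              nlinarith [mul_nonneg hgx hEx.le]
      have e2 : x * (g x * (E x * (C * v' x / 2))) ≤ - (C * x * f x * (g x * E x)) := by
        have hcoef : 0 ≤ C / 2 * (x * (g x * E x)) := by positivity
        have : C / 2 * (x * (g x * E x)) * v' x ≤
            C / 2 * (x * (g x * E x)) * (-2 * f x) :=
          mul_le_mul_of_nonneg_left h3 hcoef
        nlinarith
      have e3 : ε * ((1 + C * A) * (g x * E x)) ≤ 2 * g x := by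
        have hgE : g x * E x ≤ g x * M := mul_le_mul_of_nonneg_left hExM hgx
        have : ε * ((1 + C * A) * (g x * E x)) ≤ ε * ((1 + C * A) * (g x * M)) := by
          apply mul_le_mul_of_nonneg_left _ hεpos.le
          exact mul_le_mul_of_nonneg_left hgE hCA.le
        calc ε * ((1 + C * A) * (g x * E x)) ≤ ε * ((1 + C * A) * (g x * M)) := this
          _ = ε * ((1 + C * A) * M) * g x := by ring
          _ = 2 * g x := by rw [hε2]
      have hsum : f' x + ε * (1 * (g x * E x) +
          x * (g' x * E x + g x * (E x * (C * v' x / 2)))) ≤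
          (-2 * g x - 2 * f x ^ 2) + ε * ((1 + C * A) * (g x * E x)) := by
        have h4 : 1 * (g x * E x) + x * (g' x * E x + g x * (E x * (C * v' x / 2))) ≤
            (1 + C * A) * (g x * E x) := by
          have : x * (g' x * E x + g x * (E x * (C * v' x / 2))) =
              x * (g' x * E x) + x * (g x * (E x * (C * v' x / 2))) := by ring
          rw [this]
          nlinarith
        have := mul_le_mul_of_nonneg_left h4 hεpos.le
        linarith
      linarith [hsum, e3, sq_nonneg (f x)]
  clear_value M ε E W
  -- conclude
  refine ⟨1 + W (2 * α) / ε, ?_, ?_⟩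
  · have hW2 : 0 ≤ W (2 * α) := by
      rw [hW]
      have h1 := hf0 (2 * α) hα2
      have h2 := hg0 (2 * α) hα2
      have h3 : 0 < E (2 * α) := by rw [hE]; exact Real.exp_pos _
      have : (0:ℝ) ≤ 2 * α := by linarith
      positivity
    have : 0 ≤ W (2 * α) / ε := div_nonneg hW2 hεpos.le
    linarith
  · intro t ht
    have htα : α ≤ t := by linarith
    have htpos : 0 < t := by linarith
    have hWt : W t ≤ W (2 * α) := hWanti (Set.self_mem_Ici) ht ht
    have hgE : t * g t ≤ t * (g t * E t) := by
      have h1 := hg0 t htα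
      have h2 := hE1 t htα
      have h3 : g t * 1 ≤ g t * E t := mul_le_mul_of_nonneg_left h2 h1
      rw [mul_one] at h3
      exact mul_le_mul_of_nonneg_left h3 htpos.le
    have hWlb : ε * (t * (g t * E t)) ≤ W t := by
      rw [hW]
      have := hf0 t htα
      simp only []
      linarith
    have htg : t * g t ≤ W (2 * α) / ε := by
      rw [le_div_iff₀ hεpos]
      calc t * g t * ε = ε * (t * g t) := by ring
        _ ≤ ε * (t * (g t * E t)) := mul_le_mul_of_nonneg_left hgE hεpos.le
        _ ≤ W t := hWlb
        _ ≤ W (2 * α) := hWt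
    have := hft1 t ht
    calc t * (f t + g t) = t * f t + t * g t := by ring
      _ ≤ 1 + W (2 * α) / ε := by linarith
end
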